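/- Let (X,d,μ) be a metric measure space with doubling μ satisfying μ(B(c,r'))/μ(B(c,r)) ≲ (r'/r)^σ for some σ > 0, c ∈ X and all 0 < r' ≤ r ≤ 2 diam X. Let p > 1 and -σ < α < σ(p-1), and set w(x) = d(x,c)^α. Then w is an A_p weight with respect to μ: for every ball B ⊂ X, (⨍_B w dμ) (⨍_B w^{1/(1-p)} dμ)^{p-1} ≤ C, with C depending only on the comparison constant in the decay condition, α and σ. -/

import Mathlib

open MeasureTheory Metric Set ENNReal


lemma crux {X : Type*} [MeasurableSpace X] (μ : Measure X) {t : Set X} {g : X → ℝ≥0∞} {M : ℝ≥0∞}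
    (h : ∀ x ∈ t, g x ≤ M) : ∫⁻ x in t, g x ∂μ ≤ M * μ t := by
  rw [lintegral_def]
  refine iSup_le fun φ => iSup_le fun hφ => ?_
  rw [← SimpleFunc.lintegral_eq_lintegral]
  have hD : MeasurableSet {x | M < φ x} := measurableSet_lt measurable_const φ.measurable
  have hnull : (μ.restrict t) {x | M < φ x} = 0 := by
    rw [Measure.restrict_apply hD]
    have : {x | M < φ x} ∩ t = ∅ := by
      ext x; simp only [mem_inter_iff, mem_setOf_eq, mem_empty_iff_false, iff_false, not_and]
      intro hx hxt
      exact absurd ((hφ x).trans (h x hxt)) (not_le.2 hx)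
    rw [this]; exact measure_empty
  have hae : (fun x => φ x) =ᵐ[μ.restrict t] fun x => min (φ x) M := by
    refine measure_mono_null (fun x hx => ?_) hnull
    simp only [mem_compl_iff, mem_setOf_eq] at hx ⊢
    by_contra hMx
    exact hx ((min_eq_left (not_lt.1 hMx)).symm)
  calc ∫⁻ x, φ x ∂(μ.restrict t) = ∫⁻ x, min (φ x) M ∂(μ.restrict t) := lintegral_congr_ae hae
    _ ≤ ∫⁻ _, M ∂(μ.restrict t) := lintegral_mono fun x => min_le_right _ _
    _ = M * μ t := by rw [lintegral_const, Measure.restrict_apply_univ]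

lemma int_le_lint {X : Type*} [MeasurableSpace X] (ν : Measure X) (f : X → ℝ) (h0 : ∀ x, 0 ≤ f x) :
    ∫ x, f x ∂ν ≤ (∫⁻ x, ENNReal.ofReal (f x) ∂ν).toReal := by
  by_cases hf : Integrable f ν
  · rw [integral_eq_lintegral_of_nonneg_ae (ae_of_all _ h0) hf.aestronglyMeasurable]
  · rw [integral_undef hf]; exact ENNReal.toReal_nonneg

lemma avg_le {X : Type*} [MeasurableSpace X] (μ : Measure X) {s : Set X} (hs0 : μ s ≠ 0)
    (hst : μ s ≠ ⊤) {f : X → ℝ} (h0 : ∀ x, 0 ≤ f x) {M : ℝ} (hM : 0 ≤ M)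
    (hb : ∫⁻ x in s, ENNReal.ofReal (f x) ∂μ ≤ ENNReal.ofReal M * μ s) :
    ⨍ x in s, f x ∂μ ≤ M := by
  rw [setAverage_eq, smul_eq_mul]
  have h1 : ∫ x in s, f x ∂μ ≤ (∫⁻ x in s, ENNReal.ofReal (f x) ∂μ).toReal := int_le_lint _ f h0
  have h2 : (∫⁻ x in s, ENNReal.ofReal (f x) ∂μ).toReal ≤ (ENNReal.ofReal M * μ s).toReal :=
    ENNReal.toReal_mono (ENNReal.mul_ne_top ENNReal.ofReal_ne_top hst) hb
  rw [ENNReal.toReal_mul, ENNReal.toReal_ofReal hM] at h2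
  have hμpos : 0 < (μ s).toReal := ENNReal.toReal_pos hs0 hst
  calc (μ s).toReal⁻¹ * ∫ x in s, f x ∂μ ≤ (μ s).toReal⁻¹ * (M * (μ s).toReal) := by
        exact mul_le_mul_of_nonneg_left (h1.trans h2) (inv_nonneg.2 ENNReal.toReal_nonneg)
    _ = M := by field_simp
    
lemma avg_nonneg {X : Type*} [MeasurableSpace X] (μ : Measure X) {s : Set X} {f : X → ℝ}
    (h0 : ∀ x, 0 ≤ f x) : 0 ≤ ⨍ x in s, f x ∂μ := by
  rw [setAverage_eq, smul_eq_mul]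
  exact mul_nonneg (inv_nonneg.2 ENNReal.toReal_nonneg) (integral_nonneg h0)

lemma ptb {t d γ : ℝ} (hd : 0 < d) (h1 : d / 2 ≤ t) (h2 : t ≤ 2 * d) :
    t ^ γ ≤ 2 ^ |γ| * d ^ γ := by
  rcases le_or_gt 0 γ with hγ | hγ
  · rw [abs_of_nonneg hγ]
    calc t ^ γ ≤ (2 * d) ^ γ := Real.rpow_le_rpow (by linarith) h2 hγ
      _ = 2 ^ γ * d ^ γ := Real.mul_rpow (by norm_num) hd.le
  · rw [abs_of_neg hγ]
    calc t ^ γ ≤ (d / 2) ^ γ := Real.rpow_le_rpow_of_nonpos (by linarith) h1 hγ.le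
      _ = 2 ^ (-γ) * d ^ γ := by
        rw [div_eq_mul_inv, Real.mul_rpow hd.le (by norm_num), Real.inv_rpow (by norm_num),
          ← Real.rpow_neg (by norm_num)]
        ring

lemma key_int {X : Type*} [MetricSpace X] [MeasurableSpace X]
    (μ : Measure X) (c : X) (C σ : ℝ) (hC : 0 < C) (hσ : 0 < σ)
    (hdecay : ∀ r' r : ℝ, 0 < r' → r' ≤ r →
      ENNReal.ofReal r ≤ 2 * EMetric.diam (Set.univ : Set X) →
      μ (Metric.ball c r') ≤ ENNReal.ofReal (C * (r' / r) ^ σ) * μ (Metric.ball c r))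
    (γ : ℝ) (hγ : -σ < γ) :
    ∃ A : ℝ, 0 < A ∧ ∀ ρ : ℝ, 0 < ρ →
      ENNReal.ofReal ρ ≤ 2 * EMetric.diam (Set.univ : Set X) →
      ∫⁻ x in Metric.ball c ρ, ENNReal.ofReal (dist x c ^ γ) ∂μ
        ≤ ENNReal.ofReal (A * ρ ^ γ) * μ (Metric.ball c ρ) := by
  rcases le_or_gt 0 γ with hγ0 | hγ0
  · refine ⟨1, one_pos, fun ρ hρ _ => ?_⟩
    rw [one_mul]
    refine crux μ fun x hx => ?_
    exact ENNReal.ofReal_le_ofReal (Real.rpow_le_rpow dist_nonneg (le_of_lt hx) hγ0)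
  · -- γ < 0
    set b : ℝ := (2 : ℝ)⁻¹ with hbdef
    have hb0 : 0 < b := by norm_num
    have hb1 : b < 1 := by norm_num
    set q : ℝ := b ^ (σ + γ) with hqdef
    have hq0 : 0 < q := Real.rpow_pos_of_pos hb0 _
    have hq1 : q < 1 := Real.rpow_lt_one hb0.le hb1 (by linarith)
    set T : ℝ := (1 - q)⁻¹ with hTdef
    have hT0 : 0 < T := inv_pos.2 (by linarith)
    have hbγ : (0:ℝ) < b ^ γ := Real.rpow_pos_of_pos hb0 _
    refine ⟨C * b ^ γ * T, by positivity, fun ρ hρ hρD => ?_⟩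
    set s : ℕ → Set X := fun k => Metric.ball c (b ^ k * ρ) with hsdef
    -- covering
    have hcover : Metric.ball c ρ ⊆ {c} ∪ ⋃ k, (s k \ s (k + 1)) := by
      intro x hx
      rcases eq_or_ne x c with hxc | hxc
      · exact Or.inl (by simp [hxc])
      · right
        have hdx : 0 < dist x c := dist_pos.2 hxc
        have hex : ∃ n : ℕ, b ^ (n + 1) * ρ ≤ dist x c := by
          obtain ⟨n, hn⟩ := exists_pow_lt_of_lt_one (div_pos hdx hρ) hb1
          refine ⟨n, ?_⟩
          have h1 : b ^ (n + 1) ≤ b ^ n := pow_le_pow_of_le_one hb0.le hb1.le (by omega)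
          have h2 : b ^ n < dist x c / ρ := hn
          have := (lt_div_iff₀ hρ).1 h2
          nlinarith [pow_pos hb0 (n+1)]
        set k₀ := Nat.find hex with hk₀
        have hfind := Nat.find_spec hex
        refine mem_iUnion.2 ⟨k₀, ?_, ?_⟩
        · -- x ∈ s k₀
          rcases Nat.eq_zero_or_pos k₀ with h0 | h0
          · simpa [hsdef, h0] using hx
          · obtain ⟨m, hm⟩ : ∃ m, k₀ = m + 1 := ⟨k₀ - 1, by omega⟩
            have := Nat.find_min hex (m := m) (by omega)
            push_neg at this
            simpa [hsdef, Metric.mem_ball, dist_comm, hm] using this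
        · -- x ∉ s (k₀ + 1)
          simp only [hsdef, Metric.mem_ball]
          exact not_lt.2 hfind
    have hball0 : Metric.ball c (b ^ 0 * ρ) = Metric.ball c ρ := by norm_num
    -- individual annulus estimates
    have hann : ∀ k : ℕ, ∫⁻ x in s k \ s (k + 1), ENNReal.ofReal (dist x c ^ γ) ∂μ
        ≤ ENNReal.ofReal (q ^ k) * (ENNReal.ofReal (C * b ^ γ * ρ ^ γ) * μ (Metric.ball c ρ)) := by
      intro k
      have hrad : (0:ℝ) < b ^ (k + 1) * ρ := by positivity
      have hbound : ∀ x ∈ s k \ s (k + 1),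
          ENNReal.ofReal (dist x c ^ γ) ≤ ENNReal.ofReal ((b ^ (k + 1) * ρ) ^ γ) := by
        intro x hx
        have hge : b ^ (k + 1) * ρ ≤ dist x c := not_lt.1 (by simpa [hsdef, Metric.mem_ball] using hx.2)
        exact ENNReal.ofReal_le_ofReal (Real.rpow_le_rpow_of_nonpos hrad hge hγ0.le)
      have hdk : μ (s k) ≤ ENNReal.ofReal (C * (b ^ k) ^ σ) * μ (Metric.ball c ρ) := by
        have h1 : (0:ℝ) < b ^ k * ρ := by positivity
        have h2 : b ^ k * ρ ≤ ρ := by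
          nlinarith [pow_le_one₀ hb0.le hb1.le (n := k)]
        have := hdecay (b ^ k * ρ) ρ h1 h2 hρD
        simpa [mul_div_assoc, div_self hρ.ne'] using this
      have hscal : (b ^ (k + 1) * ρ) ^ γ * (C * (b ^ k) ^ σ) = q ^ k * (C * b ^ γ * ρ ^ γ) := by
        have e1 : ((b:ℝ) ^ (k + 1)) ^ γ = b ^ (((k:ℝ) + 1) * γ) := by
          rw [← Real.rpow_natCast b (k + 1), ← Real.rpow_mul hb0.le]
          push_cast; ring_nf
        have e2 : ((b:ℝ) ^ k) ^ σ = b ^ ((k:ℝ) * σ) := by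
          rw [← Real.rpow_natCast b k, ← Real.rpow_mul hb0.le]
        have e3 : (q:ℝ) ^ k = b ^ ((σ + γ) * (k:ℝ)) := by
          rw [hqdef, ← Real.rpow_natCast (b ^ (σ + γ)) k, ← Real.rpow_mul hb0.le]
        rw [Real.mul_rpow (by positivity) hρ.le, e1, e2, e3]
        rw [show ((k:ℝ) + 1) * γ = γ + (k:ℝ) * γ by ring, Real.rpow_add hb0,
          show (σ + γ) * (k:ℝ) = (k:ℝ) * σ + (k:ℝ) * γ by ring, Real.rpow_add hb0]
        ring
      calc ∫⁻ x in s k \ s (k + 1), ENNReal.ofReal (dist x c ^ γ) ∂μ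
          ≤ ENNReal.ofReal ((b ^ (k + 1) * ρ) ^ γ) * μ (s k \ s (k + 1)) := crux μ hbound
        _ ≤ ENNReal.ofReal ((b ^ (k + 1) * ρ) ^ γ) * μ (s k) :=
            mul_le_mul_right (measure_mono diff_subset) _
        _ ≤ ENNReal.ofReal ((b ^ (k + 1) * ρ) ^ γ) *
              (ENNReal.ofReal (C * (b ^ k) ^ σ) * μ (Metric.ball c ρ)) := mul_le_mul_right hdk _
        _ = ENNReal.ofReal ((b ^ (k + 1) * ρ) ^ γ * (C * (b ^ k) ^ σ)) * μ (Metric.ball c ρ) := by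
            conv_rhs => rw [ENNReal.ofReal_mul (show (0:ℝ) ≤ (b ^ (k + 1) * ρ) ^ γ from by positivity)]
            ring
        _ = ENNReal.ofReal (q ^ k) * (ENNReal.ofReal (C * b ^ γ * ρ ^ γ) * μ (Metric.ball c ρ)) := by
            rw [hscal, ENNReal.ofReal_mul (by positivity), mul_assoc]
    -- sum up
    have hsum : ∑' k : ℕ, (ENNReal.ofReal (q ^ k) *
          (ENNReal.ofReal (C * b ^ γ * ρ ^ γ) * μ (Metric.ball c ρ)))
        = ENNReal.ofReal T * (ENNReal.ofReal (C * b ^ γ * ρ ^ γ) * μ (Metric.ball c ρ)) := by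
      rw [ENNReal.tsum_mul_right, ← ENNReal.ofReal_tsum_of_nonneg (fun k => by positivity)
        (summable_geometric_of_lt_one hq0.le hq1), tsum_geometric_of_lt_one hq0.le hq1]
    have hc_part : ∫⁻ x in ({c} : Set X), ENNReal.ofReal (dist x c ^ γ) ∂μ = 0 := by
      have := crux μ (t := ({c} : Set X)) (M := 0)
        (g := fun x => ENNReal.ofReal (dist x c ^ γ)) ?_
      · simpa using this
      · intro x hx
        rcases hx with rfl
        simp [Real.zero_rpow (ne_of_lt hγ0)]
    calc ∫⁻ x in Metric.ball c ρ, ENNReal.ofReal (dist x c ^ γ) ∂μ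
        ≤ ∫⁻ x in ({c} ∪ ⋃ k, (s k \ s (k + 1)) : Set X), ENNReal.ofReal (dist x c ^ γ) ∂μ :=
          lintegral_mono' (Measure.restrict_mono hcover le_rfl) le_rfl
      _ ≤ (∫⁻ x in ({c} : Set X), ENNReal.ofReal (dist x c ^ γ) ∂μ) +
            ∫⁻ x in (⋃ k, (s k \ s (k + 1)) : Set X), ENNReal.ofReal (dist x c ^ γ) ∂μ :=
          lintegral_union_le _ _ _
      _ ≤ 0 + ∑' k : ℕ, ∫⁻ x in s k \ s (k + 1), ENNReal.ofReal (dist x c ^ γ) ∂μ := by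
          rw [hc_part]; exact add_le_add le_rfl (lintegral_iUnion_le _ _)
      _ ≤ ∑' k : ℕ, (ENNReal.ofReal (q ^ k) *
            (ENNReal.ofReal (C * b ^ γ * ρ ^ γ) * μ (Metric.ball c ρ))) := by
          rw [zero_add]; exact ENNReal.tsum_le_tsum hann
      _ = ENNReal.ofReal T * (ENNReal.ofReal (C * b ^ γ * ρ ^ γ) * μ (Metric.ball c ρ)) := hsum
      _ = ENNReal.ofReal (C * b ^ γ * T * ρ ^ γ) * μ (Metric.ball c ρ) := by
          rw [← mul_assoc, ← ENNReal.ofReal_mul hT0.le]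
          congr 2
          ring

/-- If `μ` is doubling and satisfies the power decay
`μ(B(c,r'))/μ(B(c,r)) ≲ (r'/r)^σ` for balls centered at `c`, `p > 1` and
`-σ < α < σ(p-1)`, then `w = d(·,c)^α` is a Muckenhoupt `A_p` weight:
`(⨍_B w dμ)(⨍_B w^{1/(1-p)} dμ)^{p-1} ≤ C'` for every ball `B ⊂ X`. -/
theorem power_weight_is_Ap {X : Type*} [MetricSpace X] [MeasurableSpace X]
    (μ : Measure X) (c : X)
    (hball : ∀ (x : X) (r : ℝ), 0 < r → 0 < μ (Metric.ball x r) ∧ μ (Metric.ball x r) < ⊤)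
    (CD : ℝ) (hCD : 0 < CD)
    (hdoub : ∀ (x : X) (r : ℝ), 0 < r →
      μ (Metric.ball x (2 * r)) ≤ ENNReal.ofReal CD * μ (Metric.ball x r))
    (C σ : ℝ) (hC : 0 < C) (hσ : 0 < σ)
    (hdecay : ∀ r' r : ℝ, 0 < r' → r' ≤ r →
      ENNReal.ofReal r ≤ 2 * EMetric.diam (Set.univ : Set X) →
      μ (Metric.ball c r') ≤ ENNReal.ofReal (C * (r' / r) ^ σ) * μ (Metric.ball c r))
    (p α : ℝ) (hp : 1 < p) (hα1 : -σ < α) (hα2 : α < σ * (p - 1)) :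
    ∃ C' : ℝ, 0 < C' ∧ ∀ (z : X) (r : ℝ), 0 < r →
      (⨍ x in Metric.ball z r, dist x c ^ α ∂μ) *
        (⨍ x in Metric.ball z r, (dist x c ^ α) ^ (1 / (1 - p)) ∂μ) ^ (p - 1) ≤ C' := by
  have hp1 : (0:ℝ) < p - 1 := by linarith
  have h1p : (1:ℝ) - p ≠ 0 := by intro h; linarith
  set γ₂ : ℝ := α * (1 / (1 - p)) with hγ₂def
  have hkeyγ : γ₂ * (p - 1) = -α := by
    rw [hγ₂def]; field_simp; ring
  have hγ₂σ : -σ < γ₂ := by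
    by_contra h
    push_neg at h
    have h2 := mul_le_mul_of_nonneg_right h hp1.le
    rw [hkeyγ] at h2
    nlinarith
  have hrw : ∀ x : X, (dist x c ^ α) ^ (1 / (1 - p)) = dist x c ^ γ₂ :=
    fun x => (Real.rpow_mul dist_nonneg α _).symm
  obtain ⟨A₁, hA₁, hkey₁⟩ := key_int μ c C σ hC hσ hdecay α hα1
  obtain ⟨A₂, hA₂, hkey₂⟩ := key_int μ c C σ hC hσ hdecay γ₂ hγ₂σ
  set C1 : ℝ := (A₁ * CD ^ 3) * (A₂ * CD ^ 3) ^ (p - 1) with hC1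
  set C2 : ℝ := (2:ℝ) ^ |α| * ((2:ℝ) ^ |γ₂|) ^ (p - 1) with hC2
  have hC1pos : 0 < C1 := by
    have h1 := Real.rpow_pos_of_pos (show (0:ℝ) < A₂ * CD ^ 3 by positivity) (p - 1)
    positivity
  have hC2pos : 0 < C2 := by
    have h1 := Real.rpow_pos_of_pos (show (0:ℝ) < 2 by norm_num) |α|
    have h2 := Real.rpow_pos_of_pos (Real.rpow_pos_of_pos (show (0:ℝ) < 2 by norm_num) |γ₂|) (p - 1)
    positivity
  refine ⟨max C1 (max C2 1), by positivity, fun z r hr => ?_⟩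
  simp only [hrw]
  obtain ⟨hB0', hBt'⟩ := hball z r hr
  have hB0 : μ (Metric.ball z r) ≠ 0 := hB0'.ne'
  have hBt : μ (Metric.ball z r) ≠ ⊤ := hBt'.ne
  have hf0 : ∀ γ : ℝ, ∀ x : X, 0 ≤ dist x c ^ γ :=
    fun γ x => Real.rpow_nonneg dist_nonneg _
  have hv₂0 : 0 ≤ ⨍ x in Metric.ball z r, dist x c ^ γ₂ ∂μ := avg_nonneg μ (hf0 γ₂)
  have hprod : ∀ m₁ m₂ : ℝ, 0 ≤ m₁ →
      (⨍ x in Metric.ball z r, dist x c ^ α ∂μ) ≤ m₁ →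
      (⨍ x in Metric.ball z r, dist x c ^ γ₂ ∂μ) ≤ m₂ →
      (⨍ x in Metric.ball z r, dist x c ^ α ∂μ) *
        (⨍ x in Metric.ball z r, dist x c ^ γ₂ ∂μ) ^ (p - 1) ≤ m₁ * m₂ ^ (p - 1) :=
    fun m₁ m₂ hm₁ h₁ h₂ =>
      mul_le_mul h₁ (Real.rpow_le_rpow hv₂0 h₂ hp1.le) (Real.rpow_nonneg hv₂0 _) hm₁
  by_cases hD0 : EMetric.diam (Set.univ : Set X) = 0
  · -- degenerate: X is a single point
    have hxc : ∀ x : X, dist x c = 0 := by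
      intro x
      have h : edist x c ≤ EMetric.diam (Set.univ : Set X) := EMetric.edist_le_diam_of_mem (mem_univ x) (mem_univ c)
      rw [hD0] at h
      have h2 : edist x c = 0 := le_antisymm h zero_le
      rw [dist_eq_zero]
      exact edist_eq_zero.1 h2
    have h₁ : (⨍ x in Metric.ball z r, dist x c ^ α ∂μ) ≤ (0:ℝ) ^ α := by
      refine avg_le μ hB0 hBt (hf0 α) (Real.rpow_nonneg le_rfl _) ?_
      refine crux μ fun x _ => ?_
      rw [hxc x]
    have h₂ : (⨍ x in Metric.ball z r, dist x c ^ γ₂ ∂μ) ≤ (0:ℝ) ^ γ₂ := by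
      refine avg_le μ hB0 hBt (hf0 γ₂) (Real.rpow_nonneg le_rfl _) ?_
      refine crux μ fun x _ => ?_
      rw [hxc x]
    have hbd : ((0:ℝ) ^ α) * ((0:ℝ) ^ γ₂) ^ (p - 1) ≤ 1 := by
      rcases eq_or_ne α 0 with hα0 | hα0
      · have hγ₂0 : γ₂ = 0 := by rw [hγ₂def, hα0, zero_mul]
        rw [hα0, hγ₂0]
        simp [Real.rpow_zero, Real.one_rpow]
      · have hγ₂0 : γ₂ ≠ 0 := by
          rw [hγ₂def]
          exact mul_ne_zero hα0 (one_div_ne_zero h1p)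
        rw [Real.zero_rpow hα0, Real.zero_rpow hγ₂0, Real.zero_rpow (by linarith : p - 1 ≠ 0),
          zero_mul]
        norm_num
    calc (⨍ x in Metric.ball z r, dist x c ^ α ∂μ) *
          (⨍ x in Metric.ball z r, dist x c ^ γ₂ ∂μ) ^ (p - 1)
        ≤ ((0:ℝ) ^ α) * ((0:ℝ) ^ γ₂) ^ (p - 1) :=
          hprod _ _ (Real.rpow_nonneg le_rfl _) h₁ h₂
      _ ≤ 1 := hbd
      _ ≤ max C1 (max C2 1) := (le_max_right C2 1).trans (le_max_right C1 _)
  · by_cases hcase : dist z c < 2 * r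
    · -- central balls
      obtain ⟨ρ, hρ0, hρD, hsub1, hsub4⟩ : ∃ ρ : ℝ, 0 < ρ ∧
          ENNReal.ofReal ρ ≤ 2 * EMetric.diam (Set.univ : Set X) ∧
          Metric.ball z r ⊆ Metric.ball c ρ ∧ Metric.ball c ρ ⊆ Metric.ball z (8 * r) := by
        by_cases hfit : ENNReal.ofReal (3 * r) ≤ 2 * EMetric.diam (Set.univ : Set X)
        · refine ⟨3 * r, by linarith, hfit, fun x hx => ?_, fun x hx => ?_⟩
          · rw [Metric.mem_ball] at hx ⊢
            have ht := dist_triangle x z c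
            linarith
          · rw [Metric.mem_ball] at hx ⊢
            have ht := dist_triangle x c z
            have hcz : dist c z = dist z c := dist_comm c z
            linarith
        · have hDtop : EMetric.diam (Set.univ : Set X) ≠ ⊤ := by
            intro h
            rw [h] at hfit
            simp [ENNReal.top_mul] at hfit
          set Dt := (EMetric.diam (Set.univ : Set X)).toReal with hDt
          have hDt0 : 0 < Dt := ENNReal.toReal_pos hD0 hDtop
          have hDeq : ENNReal.ofReal (2 * Dt) = 2 * EMetric.diam (Set.univ : Set X) := by
            rw [ENNReal.ofReal_mul (by norm_num), ENNReal.ofReal_toReal hDtop]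
            norm_num
          have h3r : 2 * Dt < 3 * r := by
            by_contra h
            push_neg at h
            exact hfit (le_of_le_of_eq (ENNReal.ofReal_le_ofReal h) hDeq)
          have hdistD : ∀ x y : X, dist x y ≤ Dt := by
            intro x y
            have h := EMetric.edist_le_diam_of_mem (mem_univ x) (mem_univ y)
            rw [dist_edist]
            exact ENNReal.toReal_mono hDtop h
          refine ⟨2 * Dt, by linarith, le_of_eq hDeq, fun x hx => ?_, fun x hx => ?_⟩
          · rw [Metric.mem_ball]
            have := hdistD x c
            linarith
          · rw [Metric.mem_ball]
            have := hdistD x z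
            linarith
      have hμ3 : μ (Metric.ball c ρ) ≤ ENNReal.ofReal (CD ^ 3) * μ (Metric.ball z r) := by
        have d1 := hdoub z (4 * r) (by linarith)
        have d2 := hdoub z (2 * r) (by linarith)
        have d3 := hdoub z r hr
        calc μ (Metric.ball c ρ) ≤ μ (Metric.ball z (8 * r)) := measure_mono hsub4
          _ = μ (Metric.ball z (2 * (4 * r))) := by rw [show (8:ℝ) * r = 2 * (4 * r) by ring]
          _ ≤ ENNReal.ofReal CD * μ (Metric.ball z (4 * r)) := d1
          _ = ENNReal.ofReal CD * μ (Metric.ball z (2 * (2 * r))) := by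
              rw [show (4:ℝ) * r = 2 * (2 * r) by ring]
          _ ≤ ENNReal.ofReal CD * (ENNReal.ofReal CD * μ (Metric.ball z (2 * r))) :=
              mul_le_mul_right d2 _
          _ ≤ ENNReal.ofReal CD * (ENNReal.ofReal CD * (ENNReal.ofReal CD * μ (Metric.ball z r))) :=
              mul_le_mul_right (mul_le_mul_right d3 _) _
          _ = ENNReal.ofReal (CD ^ 3) * μ (Metric.ball z r) := by
              rw [ENNReal.ofReal_pow hCD.le]
              ring
      have havg : ∀ γ A : ℝ, 0 < A →
          (∫⁻ x in Metric.ball c ρ, ENNReal.ofReal (dist x c ^ γ) ∂μ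
            ≤ ENNReal.ofReal (A * ρ ^ γ) * μ (Metric.ball c ρ)) →
          (⨍ x in Metric.ball z r, dist x c ^ γ ∂μ) ≤ A * CD ^ 3 * ρ ^ γ := by
        intro γ A hA hint
        have hργ : 0 < ρ ^ γ := Real.rpow_pos_of_pos hρ0 _
        refine avg_le μ hB0 hBt (hf0 γ) (by positivity) ?_
        calc ∫⁻ x in Metric.ball z r, ENNReal.ofReal (dist x c ^ γ) ∂μ
            ≤ ∫⁻ x in Metric.ball c ρ, ENNReal.ofReal (dist x c ^ γ) ∂μ :=
              lintegral_mono' (Measure.restrict_mono hsub1 le_rfl) le_rfl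
          _ ≤ ENNReal.ofReal (A * ρ ^ γ) * μ (Metric.ball c ρ) := hint
          _ ≤ ENNReal.ofReal (A * ρ ^ γ) * (ENNReal.ofReal (CD ^ 3) * μ (Metric.ball z r)) :=
              mul_le_mul_right hμ3 _
          _ = ENNReal.ofReal (A * CD ^ 3 * ρ ^ γ) * μ (Metric.ball z r) := by
              rw [← mul_assoc, ← ENNReal.ofReal_mul (by positivity)]
              congr 2
              ring
      have h₁ := havg α A₁ hA₁ (hkey₁ ρ hρ0 hρD)
      have h₂ := havg γ₂ A₂ hA₂ (hkey₂ ρ hρ0 hρD)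
      have hEq : (A₁ * CD ^ 3 * ρ ^ α) * (A₂ * CD ^ 3 * ρ ^ γ₂) ^ (p - 1) = C1 := by
        rw [Real.mul_rpow (by positivity) (Real.rpow_nonneg hρ0.le _), ← Real.rpow_mul hρ0.le,
          hkeyγ, hC1]
        have hρc : ρ ^ α * ρ ^ (-α) = 1 := by
          rw [← Real.rpow_add hρ0]
          simp
        linear_combination (A₁ * CD ^ 3 * (A₂ * CD ^ 3) ^ (p - 1)) * hρc
      calc (⨍ x in Metric.ball z r, dist x c ^ α ∂μ) *
            (⨍ x in Metric.ball z r, dist x c ^ γ₂ ∂μ) ^ (p - 1)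
          ≤ (A₁ * CD ^ 3 * ρ ^ α) * (A₂ * CD ^ 3 * ρ ^ γ₂) ^ (p - 1) :=
            hprod _ _ (by have := Real.rpow_pos_of_pos hρ0 α; positivity) h₁ h₂
        _ = C1 := hEq
        _ ≤ max C1 (max C2 1) := le_max_left _ _
    · -- far balls
      push_neg at hcase
      have hd0 : 0 < dist z c := by linarith
      have hpt : ∀ γ : ℝ, ∀ x ∈ Metric.ball z r, dist x c ^ γ ≤ 2 ^ |γ| * dist z c ^ γ := by
        intro γ x hx
        rw [Metric.mem_ball] at hx
        refine ptb hd0 ?_ ?_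
        · have ht := dist_triangle z x c
          have hzx : dist z x = dist x z := dist_comm z x
          linarith
        · have ht := dist_triangle x z c
          linarith
      have havg2 : ∀ γ : ℝ, (⨍ x in Metric.ball z r, dist x c ^ γ ∂μ)
          ≤ 2 ^ |γ| * dist z c ^ γ := by
        intro γ
        have h2γ : (0:ℝ) < 2 ^ |γ| := Real.rpow_pos_of_pos (by norm_num) _
        have hdγ : (0:ℝ) < dist z c ^ γ := Real.rpow_pos_of_pos hd0 _
        refine avg_le μ hB0 hBt (hf0 γ) (by positivity) ?_
        have := crux μ (t := Metric.ball z r)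
          (g := fun x => ENNReal.ofReal (dist x c ^ γ))
          (M := ENNReal.ofReal (2 ^ |γ| * dist z c ^ γ))
          (fun x hx => ENNReal.ofReal_le_ofReal (hpt γ x hx))
        exact this
      have hEq : (2 ^ |α| * dist z c ^ α) * (2 ^ |γ₂| * dist z c ^ γ₂) ^ (p - 1) = C2 := by
        rw [Real.mul_rpow (Real.rpow_nonneg (by norm_num) _) (Real.rpow_nonneg hd0.le _),
          ← Real.rpow_mul hd0.le, hkeyγ, hC2]
        have hdc : dist z c ^ α * dist z c ^ (-α) = 1 := by
          rw [← Real.rpow_add hd0]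
          simp
        linear_combination ((2:ℝ) ^ |α| * ((2:ℝ) ^ |γ₂|) ^ (p - 1)) * hdc
      calc (⨍ x in Metric.ball z r, dist x c ^ α ∂μ) *
            (⨍ x in Metric.ball z r, dist x c ^ γ₂ ∂μ) ^ (p - 1)
          ≤ (2 ^ |α| * dist z c ^ α) * (2 ^ |γ₂| * dist z c ^ γ₂) ^ (p - 1) := by
            refine hprod _ _ ?_ (havg2 α) (havg2 γ₂)
            have := Real.rpow_pos_of_pos (show (0:ℝ) < 2 by norm_num) |α|
            have := Real.rpow_pos_of_pos hd0 α
            positivity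
        _ = C2 := hEq
        _ ≤ max C1 (max C2 1) := (le_max_left C2 1).trans (le_max_right C1 _)
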